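/- Let σ be a permutation of ℕ that is a cycle whose support is finite of cardinality n ≥ 2. Then there exist an integer k with k ≥ ⌈n/6⌉ and permutations σ₁, σ₂, σ₃ of ℕ, each conjugate to σ, such that ι_k = σ₁ σ₂ σ₃. -/

import Mathlib

/-- `iotaNat k` is the permutation `(1,2)(3,4)⋯(2k−1,2k)` of `ℕ`, i.e. the product of the
`k` disjoint transpositions swapping `2i` and `2i+1` for `i = 0, …, k−1`. -/
def iotaNat (k : ℕ) : Equiv.Perm ℕ :=
  ((List.range k).map fun i => Equiv.swap (2 * i) (2 * i + 1)).prod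

theorem iotaNat_succ (k : ℕ) :
    iotaNat (k+1) = iotaNat k * Equiv.swap (2*k) (2*k+1) := by
  unfold iotaNat
  rw [List.range_succ, List.map_append, List.prod_append]
  simp

theorem iotaNat_apply (k x : ℕ) :
    iotaNat k x = if x < 2*k then (if x % 2 = 0 then x + 1 else x - 1) else x := by
  induction k generalizing x with
  | zero => simp [iotaNat]
  | succ k ih =>
    rw [iotaNat_succ]
    rcases Nat.lt_trichotomy x (2*k) with h | h | h
    · have hs : Equiv.swap (2*k) (2*k+1) x = x := by
        apply Equiv.swap_apply_of_ne_of_ne <;> omega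
      rw [Equiv.Perm.mul_apply, hs, ih]
      split_ifs <;> omega
    · subst h
      rw [Equiv.Perm.mul_apply, Equiv.swap_apply_left, ih]
      split_ifs <;> omega
    · rcases Nat.eq_or_lt_of_le h with h' | h'
      · have hx : x = 2*k+1 := by omega
        subst hx
        rw [Equiv.Perm.mul_apply, Equiv.swap_apply_right, ih]
        split_ifs <;> omega
      · have hs : Equiv.swap (2*k) (2*k+1) x = x := by
          apply Equiv.swap_apply_of_ne_of_ne <;> omega
        rw [Equiv.Perm.mul_apply, hs, ih]
        split_ifs <;> omega

open Equiv Equiv.Perm List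

set_option linter.unusedSectionVars false


theorem isConj_of_cycles {σ τ : Equiv.Perm ℕ} (hσ : σ.IsCycle) (hτ : τ.IsCycle)
    (hfσ : {x : ℕ | σ x ≠ x}.Finite) (hfτ : {x : ℕ | τ x ≠ x}.Finite)
    (h : {x : ℕ | σ x ≠ x}.ncard = {x : ℕ | τ x ≠ x}.ncard) : IsConj σ τ := by
  classical
  set S : Finset ℕ := hfσ.toFinset ∪ hfτ.toFinset with hS
  have hmemσ : ∀ x, σ x ≠ x → x ∈ S := fun x hx => by
    simp only [hS, Finset.mem_union, Set.Finite.mem_toFinset, Set.mem_setOf_eq]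
    exact Or.inl hx
  have hmemτ : ∀ x, τ x ≠ x → x ∈ S := fun x hx => by
    simp only [hS, Finset.mem_union, Set.Finite.mem_toFinset, Set.mem_setOf_eq]
    exact Or.inr hx
  have key : ∀ (f : Equiv.Perm ℕ), (∀ x, f x ≠ x → x ∈ S) → ∀ x, f x ∈ S ↔ x ∈ S := by
    intro f hf x
    by_cases hx : f x = x
    · rw [hx]
    · have h1 : x ∈ S := hf x hx
      have h2 : f x ∈ S := hf (f x) (fun hc => hx (f.injective hc))
      simp [h1, h2]
  have hσS := key σ hmemσ
  have hτS := key τ hmemτ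
  have cyc : ∀ (f : Equiv.Perm ℕ) (hfS : ∀ x, f x ∈ S ↔ x ∈ S),
      (∀ x, f x ≠ x → x ∈ S) → f.IsCycle → (f.subtypePerm hfS).IsCycle := by
    rintro f hfS hf ⟨x, hx1, hx2⟩
    refine ⟨⟨x, hf x hx1⟩, ?_, ?_⟩
    · intro hc
      exact hx1 (congrArg Subtype.val hc)
    · rintro ⟨y, hyS⟩ hy
      have hy' : f y ≠ y := fun hc => hy (Subtype.ext hc)
      exact (Equiv.Perm.sameCycle_subtypePerm).mpr (hx2 hy')
  have card : ∀ (f : Equiv.Perm ℕ) (hfS : ∀ x, f x ∈ S ↔ x ∈ S)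
      (hf : ∀ x, f x ≠ x → x ∈ S) (hff : {x : ℕ | f x ≠ x}.Finite),
      (f.subtypePerm hfS).support.card = {x : ℕ | f x ≠ x}.ncard := by
    intro f hfS hf hff
    rw [Set.ncard_eq_toFinset_card _ hff]
    classical
    refine Finset.card_bij (fun a _ => (a : ℕ)) ?_ ?_ ?_
    · rintro ⟨a, haS⟩ ha
      simp only [Equiv.Perm.mem_support] at ha
      have : f a ≠ a := fun hc => ha (Subtype.ext hc)
      simpa [Set.Finite.mem_toFinset] using this
    · rintro ⟨a, _⟩ _ ⟨b, _⟩ _ hab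
      exact Subtype.ext hab
    · intro b hb
      have hb' : f b ≠ b := by simpa [Set.Finite.mem_toFinset] using hb
      refine ⟨⟨b, hf b hb'⟩, ?_, rfl⟩
      simp only [Equiv.Perm.mem_support]
      intro hc
      exact hb' (congrArg Subtype.val hc)
  have main : IsConj (σ.subtypePerm hσS) (τ.subtypePerm hτS) := by
    apply Equiv.Perm.IsCycle.isConj (cyc σ hσS hmemσ hσ) (cyc τ hτS hmemτ hτ)
    rw [card σ hσS hmemσ hfσ, card τ hτS hmemτ hfτ, h]
  have := (Equiv.Perm.ofSubtype : Equiv.Perm {x // x ∈ S} →* Equiv.Perm ℕ).map_isConj main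
  rwa [Equiv.Perm.ofSubtype_subtypePerm _ hmemσ, Equiv.Perm.ofSubtype_subtypePerm _ hmemτ] at this


/-- value at index `a` of the "s-list" (odds then highs). -/
def sfun (k a : ℕ) : ℕ := if a < k then 2*a+1 else k+a

def twoBlock (f g : ℕ → ℕ) (c d : ℕ) : List ℕ :=
  ((List.range c).map f) ++ ((List.range d).map g)

lemma twoBlock_length (f g : ℕ → ℕ) (c d : ℕ) : (twoBlock f g c d).length = c + d := by
  simp [twoBlock]

lemma twoBlock_getElem (f g : ℕ → ℕ) (c d i : ℕ) (h : i < (twoBlock f g c d).length) :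
    (twoBlock f g c d)[i] = if i < c then f i else g (i - c) := by
  rw [twoBlock_length] at h
  simp only [twoBlock, List.getElem_append, List.getElem_map, List.getElem_range,
    List.length_map, List.length_range]
  split <;> simp_all

lemma mem_twoBlock (f g : ℕ → ℕ) (c d x : ℕ) :
    x ∈ twoBlock f g c d ↔ (∃ i < c, f i = x) ∨ (∃ j < d, g j = x) := by
  simp [twoBlock]

lemma twoBlock_formPerm (f g : ℕ → ℕ) (c d : ℕ) (hnd : (twoBlock f g c d).Nodup)
    (i : ℕ) (h : i < c + d) :
    (twoBlock f g c d).formPerm (if i < c then f i else g (i - c)) =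
      if (i+1) % (c+d) < c then f ((i+1) % (c+d)) else g ((i+1) % (c+d) - c) := by
  have h' : i < (twoBlock f g c d).length := by rw [twoBlock_length]; exact h
  rw [← twoBlock_getElem f g c d i h', List.formPerm_apply_getElem _ hnd i h',
    twoBlock_getElem]
  congr 1 <;> rw [twoBlock_length]

lemma twoBlock_nodup (f g : ℕ → ℕ) (c d : ℕ)
    (hf : ∀ i < c, ∀ j < c, f i = f j → i = j)
    (hg : ∀ i < d, ∀ j < d, g i = g j → i = j)
    (hfg : ∀ i < c, ∀ j < d, f i ≠ g j) : (twoBlock f g c d).Nodup := by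
  apply List.Nodup.append
  · exact List.Nodup.map_on (by simpa using hf) List.nodup_range
  · exact List.Nodup.map_on (by simpa using hg) List.nodup_range
  · intro a ha hb
    simp only [List.mem_map, List.mem_range] at ha hb
    obtain ⟨i, hi, rfl⟩ := ha
    obtain ⟨j, hj, hij⟩ := hb
    exact hfg i hi j hj hij.symm

def listP (k m : ℕ) : List ℕ := twoBlock (fun i => 2*i) (fun j => sfun k (k+m-1-j)) k (k+m)

def listQ (k m : ℕ) : List ℕ :=
  twoBlock (fun i => sfun k (2*i % (k+m))) (fun j => 2*(k-1-j)) (k+m) k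

def listA (n : ℕ) : List ℕ := twoBlock (fun i => n-1-i) id n 0

section Main

variable {k m : ℕ} (hk : 2 ≤ k) (hm : 2 ≤ m) (hodd : (k + m) % 2 = 1)

lemma sfun_inj : ∀ i < k+m, ∀ j < k+m, sfun k i = sfun k j → i = j := by
  intro i _ j _ hij
  simp only [sfun] at hij
  split_ifs at hij <;> omega

lemma hmod (i : ℕ) (hi : i < k+m) : 2*i % (k+m) = if 2*i < k+m then 2*i else 2*i - (k+m) := by
  split_ifs with h1
  · exact Nat.mod_eq_of_lt h1
  · rw [Nat.mod_eq_sub_mod (by omega)]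
    exact Nat.mod_eq_of_lt (by omega)

include hk hm in
lemma nodupP : (listP k m).Nodup := by
  apply twoBlock_nodup
  · intro i _ j _ h; omega
  · intro i hi j hj h
    have := sfun_inj (k := k) (m := m) (k+m-1-i) (by omega) (k+m-1-j) (by omega) h
    omega
  · intro i hi j hj
    simp only [sfun]
    split_ifs <;> omega

include hk hm hodd in
lemma nodupQ : (listQ k m).Nodup := by
  obtain ⟨w, hw⟩ : ∃ w, k + m = 2*w + 1 := ⟨(k+m-1)/2, by omega⟩
  apply twoBlock_nodup
  · intro i hi j hj h
    have := sfun_inj (k := k) (m := m) (2*i % (k+m)) (Nat.mod_lt _ (by omega))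
      (2*j % (k+m)) (Nat.mod_lt _ (by omega)) h
    rw [hmod i hi, hmod j hj] at this
    split_ifs at this <;> omega
  · intro i _ j _ h; omega
  · intro i hi j hj
    simp only [sfun]
    split_ifs <;> omega

lemma nodupA (n : ℕ) : (listA n).Nodup := by
  apply twoBlock_nodup
  · intro i _ j _ h; omega
  · intro i hi; omega
  · intro i _ j hj; omega

include hk in
lemma memP_lt {x : ℕ} (hx : x ∈ listP k m) : x < 2*k+m := by
  rw [listP, mem_twoBlock] at hx
  rcases hx with ⟨i, hi, rfl⟩ | ⟨j, hj, hjx⟩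
  · omega
  · simp only [sfun] at hjx; split_ifs at hjx <;> omega

include hk in
lemma memQ_lt {x : ℕ} (hx : x ∈ listQ k m) : x < 2*k+m := by
  rw [listQ, mem_twoBlock] at hx
  rcases hx with ⟨i, hi, hix⟩ | ⟨j, hj, rfl⟩
  · have h2 : 2*i % (k+m) < k+m := Nat.mod_lt _ (by omega)
    simp only [sfun] at hix; split_ifs at hix <;> omega
  · omega

lemma memA_lt {n x : ℕ} (hx : x ∈ listA n) : x < n ∨ n = 0 := by
  rw [listA, mem_twoBlock] at hx
  rcases hx with ⟨i, hi, rfl⟩ | ⟨j, hj, hjx⟩ <;> omega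

include hk hm in
lemma PS1 (i : ℕ) (hi : i < k) :
    (listP k m).formPerm (2*i) = if i+1 < k then 2*(i+1) else 2*k+m-1 := by
  have H := twoBlock_formPerm (fun i => 2*i) (fun j => sfun k (k+m-1-j)) k (k+m)
    (nodupP hk hm) i (by omega)
  simp only [listP, listQ, listA]
  rw [if_pos hi, Nat.mod_eq_of_lt (show i+1 < k+(k+m) by omega)] at H
  rw [H]
  split_ifs with h2
  · rfl
  · have h3 : i + 1 - k = 0 := by omega
    rw [h3]
    simp only [sfun]
    split_ifs <;> omega

include hk hm in
lemma PS2 (a : ℕ) (h1 : 1 ≤ a) (h2 : a < k+m) :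
    (listP k m).formPerm (sfun k a) = sfun k (a-1) := by
  have H := twoBlock_formPerm (fun i => 2*i) (fun j => sfun k (k+m-1-j)) k (k+m)
    (nodupP hk hm) (k + (k+m-1-a)) (by omega)
  simp only [listP, listQ, listA]
  rw [if_neg (by omega), show k + (k+m-1-a) - k = k+m-1-a by omega,
    show k+m-1-(k+m-1-a) = a by omega,
    Nat.mod_eq_of_lt (show k + (k+m-1-a) + 1 < k+(k+m) by omega),
    if_neg (by omega), show k + (k+m-1-a) + 1 - k = k+m-a by omega,
    show k+m-1-(k+m-a) = a-1 by omega] at H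
  exact H

include hk hm in
lemma PS3 : (listP k m).formPerm 1 = 0 := by
  have H := twoBlock_formPerm (fun i => 2*i) (fun j => sfun k (k+m-1-j)) k (k+m)
    (nodupP hk hm) (k + (k+m) - 1) (by omega)
  simp only [listP, listQ, listA]
  rw [if_neg (by omega), show k + (k+m) - 1 - k = k+m-1 by omega,
    show k+m-1-(k+m-1) = 0 by omega, show k + (k+m) - 1 + 1 = k+(k+m) by omega,
    Nat.mod_self, if_pos (by omega)] at H
  have h0 : sfun k 0 = 1 := by simp only [sfun]; split_ifs <;> omega
  rw [h0] at H
  rw [H]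

include hk hm hodd in
lemma QS (a : ℕ) (ha : a + 2 < k+m) :
    (listQ k m).formPerm (sfun k a) = sfun k (a+2) := by
  obtain ⟨w, hw⟩ : ∃ w, k + m = 2*w + 1 := ⟨(k+m-1)/2, by omega⟩
  have hnd := nodupQ hk hm hodd
  rcases Nat.even_or_odd a with ⟨b, hb⟩ | ⟨b, hb⟩
  · have H := twoBlock_formPerm (fun i => sfun k (2*i % (k+m))) (fun j => 2*(k-1-j)) (k+m) k
      hnd b (by omega)
    simp only [listQ]
    rw [if_pos (by omega), Nat.mod_eq_of_lt (show 2*b < k+m by omega),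
      Nat.mod_eq_of_lt (show b+1 < (k+m)+k by omega), if_pos (by omega),
      Nat.mod_eq_of_lt (show 2*(b+1) < k+m by omega)] at H
    rw [show a = 2*b by omega] at ha ⊢
    rw [H, show 2*(b+1) = 2*b+2 by omega]
  · have H := twoBlock_formPerm (fun i => sfun k (2*i % (k+m))) (fun j => 2*(k-1-j)) (k+m) k
      hnd (w+1+b) (by omega)
    simp only [listQ]
    rw [if_pos (by omega), show 2*(w+1+b) = (k+m) + a by omega, Nat.add_mod_left,
      Nat.mod_eq_of_lt (show a < k+m by omega),
      Nat.mod_eq_of_lt (show w+1+b+1 < (k+m)+k by omega), if_pos (by omega),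
      show 2*(w+1+b+1) = (k+m) + (a+2) by omega, Nat.add_mod_left,
      Nat.mod_eq_of_lt (show a+2 < k+m by omega)] at H
    exact H

include hk hm hodd in
lemma QS1 : (listQ k m).formPerm (sfun k (k+m-2)) = 2*(k-1) := by
  obtain ⟨w, hw⟩ : ∃ w, k + m = 2*w + 1 := ⟨(k+m-1)/2, by omega⟩
  have H := twoBlock_formPerm (fun i => sfun k (2*i % (k+m))) (fun j => 2*(k-1-j)) (k+m) k
    (nodupQ hk hm hodd) (k+m-1) (by omega)
  simp only [listP, listQ, listA]
  rw [if_pos (by omega), show 2*(k+m-1) = (k+m) + (k+m-2) by omega, Nat.add_mod_left,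
    Nat.mod_eq_of_lt (show k+m-2 < k+m by omega),
    show k+m-1+1 = k+m by omega,
    Nat.mod_eq_of_lt (show k+m < (k+m)+k by omega), if_neg (by omega),
    show k+m-(k+m) = 0 by omega, show k-1-0 = k-1 by omega] at H
  exact H

include hk hm hodd in
lemma QS2 : (listQ k m).formPerm (sfun k (k+m-1)) = 3 := by
  obtain ⟨w, hw⟩ : ∃ w, k + m = 2*w + 1 := ⟨(k+m-1)/2, by omega⟩
  have H := twoBlock_formPerm (fun i => sfun k (2*i % (k+m))) (fun j => 2*(k-1-j)) (k+m) k
    (nodupQ hk hm hodd) w (by omega)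
  simp only [listP, listQ, listA]
  rw [if_pos (by omega), Nat.mod_eq_of_lt (show 2*w < k+m by omega),
    show 2*w = k+m-1 by omega,
    Nat.mod_eq_of_lt (show w+1 < (k+m)+k by omega), if_pos (by omega),
    show 2*(w+1) = (k+m)+1 by omega, Nat.add_mod_left,
    Nat.mod_eq_of_lt (show 1 < k+m by omega)] at H
  have h1 : sfun k 1 = 3 := by simp only [sfun]; split_ifs <;> omega
  rw [h1] at H
  exact H

include hk hm hodd in
lemma QT (x : ℕ) (h1 : x % 2 = 0) (h2 : 2 ≤ x) (h3 : x < 2*k) :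
    (listQ k m).formPerm x = x - 2 := by
  have H := twoBlock_formPerm (fun i => sfun k (2*i % (k+m))) (fun j => 2*(k-1-j)) (k+m) k
    (nodupQ hk hm hodd) ((k+m) + (k-1-x/2)) (by omega)
  simp only [listP, listQ, listA]
  rw [if_neg (by omega), show (k+m) + (k-1-x/2) - (k+m) = k-1-x/2 by omega,
    show 2*(k-1-(k-1-x/2)) = x by omega,
    Nat.mod_eq_of_lt (show (k+m) + (k-1-x/2) + 1 < (k+m)+k by omega),
    if_neg (by omega), show (k+m) + (k-1-x/2) + 1 - (k+m) = k-x/2 by omega,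
    show 2*(k-1-(k-x/2)) = x-2 by omega] at H
  exact H

include hk hm hodd in
lemma QT0 : (listQ k m).formPerm 0 = 1 := by
  have H := twoBlock_formPerm (fun i => sfun k (2*i % (k+m))) (fun j => 2*(k-1-j)) (k+m) k
    (nodupQ hk hm hodd) ((k+m) + k - 1) (by omega)
  simp only [listP, listQ, listA]
  rw [if_neg (by omega), show (k+m) + k - 1 - (k+m) = k-1 by omega,
    show 2*(k-1-(k-1)) = 0 by omega, show (k+m) + k - 1 + 1 = (k+m)+k by omega,
    Nat.mod_self, if_pos (by omega)] at H
  simp only [Nat.mul_zero, Nat.zero_mul, Nat.zero_mod] at H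
  have h0 : sfun k 0 = 1 := by simp only [sfun]; split_ifs <;> omega
  rw [h0] at H
  exact H

lemma AS (n x : ℕ) (hx : x < n) :
    (listA n).formPerm x = if x = 0 then n-1 else x-1 := by
  have H := twoBlock_formPerm (fun i => n-1-i) id n 0 (nodupA n) (n-1-x) (by omega)
  simp only [listA]
  rw [if_pos (by omega), show n-1-(n-1-x) = x by omega] at H
  by_cases h0 : x = 0
  · subst h0
    rw [show n-1-0+1 = n by omega, show n + 0 = n from rfl, Nat.mod_self,
      if_pos (by omega)] at H
    rw [H, if_pos rfl]
    omega
  · rw [Nat.mod_eq_of_lt (show n-1-x+1 < n+0 by omega), if_pos (by omega)] at H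
    rw [H, if_neg h0]
    omega

include hk hm hodd in
theorem grand :
    iotaNat k = (listP k m).formPerm * ((listQ k m).formPerm * (listA (2*k+m)).formPerm) := by
  apply Equiv.ext
  intro x
  rw [iotaNat_apply]
  simp only [Equiv.Perm.mul_apply]
  by_cases hx : x < 2*k+m
  swap
  · have hA : (listA (2*k+m)).formPerm x = x :=
      List.formPerm_apply_of_notMem (fun hmem => by
        rcases memA_lt hmem with h | h <;> omega)
    have hQ : (listQ k m).formPerm x = x :=
      List.formPerm_apply_of_notMem (fun hmem => by have := memQ_lt hk hmem; omega)
    have hP : (listP k m).formPerm x = x :=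
      List.formPerm_apply_of_notMem (fun hmem => by have := memP_lt hk hmem; omega)
    rw [hA, hQ, hP, if_neg (by omega)]
  by_cases c0 : x = 0
  · subst c0
    have hA : (listA (2*k+m)).formPerm 0 = 2*k+m-1 := by
      rw [AS _ _ hx, if_pos rfl]
    have hQ : (listQ k m).formPerm (2*k+m-1) = 3 := by
      rw [show 2*k+m-1 = sfun k (k+m-1) by simp only [sfun]; split_ifs <;> omega,
        QS2 hk hm hodd]
    have hP : (listP k m).formPerm 3 = 1 := by
      rw [show (3:ℕ) = sfun k 1 by simp only [sfun]; split_ifs <;> omega,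
        PS2 hk hm _ (by omega) (by omega)]
      simp only [sfun]; split_ifs <;> omega
    rw [hA, hQ, hP]
    split_ifs <;> omega
  by_cases c1 : x = 1
  · subst c1
    have hA : (listA (2*k+m)).formPerm 1 = 0 := by
      rw [AS _ _ hx, if_neg (by omega)]
    rw [hA, QT0 hk hm hodd, PS3 hk hm, if_pos (by omega : (1:ℕ) < 2*k)]
    norm_num
  by_cases c2 : x % 2 = 0 ∧ 2 ≤ x ∧ x + 4 ≤ 2*k
  · obtain ⟨he, h2, h4⟩ := c2
    have hA : (listA (2*k+m)).formPerm x = x - 1 := by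
      rw [AS _ _ hx, if_neg (by omega)]
    have hQ : (listQ k m).formPerm (x-1) = x + 3 := by
      rw [show x-1 = sfun k ((x-2)/2) by simp only [sfun]; split_ifs <;> omega,
        QS hk hm hodd _ (by omega)]
      simp only [sfun]; split_ifs <;> omega
    have hP : (listP k m).formPerm (x+3) = x + 1 := by
      rw [show x+3 = sfun k ((x+2)/2) by simp only [sfun]; split_ifs <;> omega,
        PS2 hk hm _ (by omega) (by omega)]
      simp only [sfun]; split_ifs <;> omega
    rw [hA, hQ, hP]
    split_ifs <;> omega
  by_cases c3 : x = 2*k-2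
  · subst c3
    have hA : (listA (2*k+m)).formPerm (2*k-2) = 2*k-3 := by
      rw [AS _ _ hx, if_neg (by omega)]; omega
    have hQ : (listQ k m).formPerm (2*k-3) = 2*k := by
      rw [show 2*k-3 = sfun k (k-2) by simp only [sfun]; split_ifs <;> omega,
        QS hk hm hodd _ (by omega)]
      simp only [sfun]; split_ifs <;> omega
    have hP : (listP k m).formPerm (2*k) = 2*k-1 := by
      rw [show 2*k = sfun k k by simp only [sfun]; split_ifs <;> omega,
        PS2 hk hm _ (by omega) (by omega)]
      simp only [sfun]; split_ifs <;> omega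
    rw [hA, hQ, hP]
    split_ifs <;> omega
  by_cases c4 : x % 2 = 1 ∧ 3 ≤ x ∧ x < 2*k
  · obtain ⟨he, h3, h2k⟩ := c4
    have hA : (listA (2*k+m)).formPerm x = x - 1 := by
      rw [AS _ _ hx, if_neg (by omega)]
    have hQ : (listQ k m).formPerm (x-1) = x - 3 := by
      rw [QT hk hm hodd _ (by omega) (by omega) (by omega)]
      omega
    have hP : (listP k m).formPerm (x-3) = x - 1 := by
      have := PS1 hk hm ((x-3)/2) (by omega)
      rw [show 2*((x-3)/2) = x - 3 by omega] at this
      rw [this, if_pos (by omega)]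
      omega
    rw [hA, hQ, hP]
    split_ifs <;> omega
  by_cases c5 : x = 2*k
  · subst c5
    have hA : (listA (2*k+m)).formPerm (2*k) = 2*k-1 := by
      rw [AS _ _ hx, if_neg (by omega)]
    have hQ : (listQ k m).formPerm (2*k-1) = 2*k+1 := by
      rw [show 2*k-1 = sfun k (k-1) by simp only [sfun]; split_ifs <;> omega,
        QS hk hm hodd _ (by omega)]
      simp only [sfun]; split_ifs <;> omega
    have hP : (listP k m).formPerm (2*k+1) = 2*k := by
      rw [show 2*k+1 = sfun k (k+1) by simp only [sfun]; split_ifs <;> omega,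
        PS2 hk hm _ (by omega) (by omega)]
      simp only [sfun]; split_ifs <;> omega
    rw [hA, hQ, hP]
    split_ifs <;> omega
  by_cases c6 : 2*k+1 ≤ x ∧ x ≤ 2*k+m-2
  · obtain ⟨h1, h2⟩ := c6
    have hA : (listA (2*k+m)).formPerm x = x - 1 := by
      rw [AS _ _ hx, if_neg (by omega)]
    have hQ : (listQ k m).formPerm (x-1) = x + 1 := by
      rw [show x-1 = sfun k (x-1-k) by simp only [sfun]; split_ifs <;> omega,
        QS hk hm hodd _ (by omega)]
      simp only [sfun]; split_ifs <;> omega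
    have hP : (listP k m).formPerm (x+1) = x := by
      rw [show x+1 = sfun k (x+1-k) by simp only [sfun]; split_ifs <;> omega,
        PS2 hk hm _ (by omega) (by omega)]
      simp only [sfun]; split_ifs <;> omega
    rw [hA, hQ, hP]
    split_ifs <;> omega
  · -- last case : x = 2*k+m-1
    have c7 : x = 2*k+m-1 := by omega
    subst c7
    have hA : (listA (2*k+m)).formPerm (2*k+m-1) = 2*k+m-2 := by
      rw [AS _ _ hx, if_neg (by omega)]; omega
    have hQ : (listQ k m).formPerm (2*k+m-2) = 2*(k-1) := by
      rw [show 2*k+m-2 = sfun k (k+m-2) by simp only [sfun]; split_ifs <;> omega,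
        QS1 hk hm hodd]
    have hP : (listP k m).formPerm (2*(k-1)) = 2*k+m-1 := by
      rw [PS1 hk hm (k-1) (by omega), if_neg (by omega)]
    rw [hA, hQ, hP]
    split_ifs <;> omega

end Main

theorem conj_formPerm {σ : Equiv.Perm ℕ} (hc : σ.IsCycle) {n : ℕ}
    (hfin : {x : ℕ | σ x ≠ x}.Finite) (hcard : {x : ℕ | σ x ≠ x}.ncard = n) (hn : 2 ≤ n)
    (l : List ℕ) (hnd : l.Nodup) (hlen : l.length = n) : IsConj σ l.formPerm := by
  have h2 : 2 ≤ l.length := by omega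
  have hne : ∀ x, l ≠ [x] := by
    intro x hx
    rw [hx] at h2
    simp at h2
  have hsupp : {x | l.formPerm x ≠ x} = ↑l.toFinset := List.support_formPerm_of_nodup' l hnd hne
  apply isConj_of_cycles hc (List.isCycle_formPerm hnd h2) hfin
    (by rw [hsupp]; exact l.toFinset.finite_toSet)
  rw [hcard, hsupp, Set.ncard_coe_finset, List.toFinset_card_of_nodup hnd, hlen]

theorem small_case (k N : ℕ) (l₁ l₂ l₃ : List ℕ)
    (hb₁ : ∀ x ∈ l₁, x < N) (hb₂ : ∀ x ∈ l₂, x < N) (hb₃ : ∀ x ∈ l₃, x < N)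
    (h2k : 2*k ≤ N)
    (hval : ∀ x < N, l₁.formPerm (l₂.formPerm (l₃.formPerm x)) = iotaNat k x) :
    iotaNat k = l₁.formPerm * (l₂.formPerm * l₃.formPerm) := by
  apply Equiv.ext
  intro x
  simp only [Equiv.Perm.mul_apply]
  by_cases hx : x < N
  · exact (hval x hx).symm
  · have f3 : l₃.formPerm x = x :=
      List.formPerm_apply_of_notMem (fun h => by have := hb₃ _ h; omega)
    have f2 : l₂.formPerm x = x :=
      List.formPerm_apply_of_notMem (fun h => by have := hb₂ _ h; omega)
    have f1 : l₁.formPerm x = x :=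
      List.formPerm_apply_of_notMem (fun h => by have := hb₁ _ h; omega)
    rw [iotaNat_apply, if_neg (by omega), f3, f2, f1]

theorem iota_eq_prod_three_conjugates_of_cycle (σ : Equiv.Perm ℕ) (hc : σ.IsCycle)
    (n : ℕ) (hfin : {x : ℕ | σ x ≠ x}.Finite) (hcard : {x : ℕ | σ x ≠ x}.ncard = n)
    (hn : 2 ≤ n) :
    ∃ k : ℕ, (n + 5) / 6 ≤ k ∧
      ∃ σ₁ σ₂ σ₃ : Equiv.Perm ℕ,
        IsConj σ σ₁ ∧ IsConj σ σ₂ ∧ IsConj σ σ₃ ∧ iotaNat k = σ₁ * σ₂ * σ₃ := by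
  have key : ∀ (k : ℕ) (l₁ l₂ l₃ : List ℕ), l₁.Nodup → l₂.Nodup → l₃.Nodup →
      l₁.length = n → l₂.length = n → l₃.length = n → (n+5)/6 ≤ k →
      iotaNat k = l₁.formPerm * (l₂.formPerm * l₃.formPerm) →
      ∃ k : ℕ, (n + 5) / 6 ≤ k ∧
      ∃ σ₁ σ₂ σ₃ : Equiv.Perm ℕ,
        IsConj σ σ₁ ∧ IsConj σ σ₂ ∧ IsConj σ σ₃ ∧ iotaNat k = σ₁ * σ₂ * σ₃ := by
    intro k l₁ l₂ l₃ hnd₁ hnd₂ hnd₃ hl₁ hl₂ hl₃ hk6 hiota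
    exact ⟨k, hk6, l₁.formPerm, l₂.formPerm, l₃.formPerm,
      conj_formPerm hc hfin hcard hn _ hnd₁ hl₁,
      conj_formPerm hc hfin hcard hn _ hnd₂ hl₂,
      conj_formPerm hc hfin hcard hn _ hnd₃ hl₃,
      by rw [hiota, mul_assoc]⟩
  by_cases hn7 : n ≤ 7
  · interval_cases n
    · exact key 1 [0,1] [1,0] [1,0] (by decide) (by decide) (by decide) rfl rfl rfl
        (by norm_num)
        (small_case 1 2 _ _ _ (by decide) (by decide) (by decide) (by norm_num) (by decide))
    · exact key 2 [0,2,3] [0,2,3] [0,1,2] (by decide) (by decide) (by decide) rfl rfl rfl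
        (by norm_num)
        (small_case 2 4 _ _ _ (by decide) (by decide) (by decide) (by norm_num) (by decide))
    · exact key 1 [0,3,2,1] [1,3,2,0] [3,2,1,0] (by decide) (by decide) (by decide)
        rfl rfl rfl (by norm_num)
        (small_case 1 4 _ _ _ (by decide) (by decide) (by decide) (by norm_num) (by decide))
    · exact key 2 [0,2,4,3,1] [1,4,3,2,0] [4,3,2,1,0] (by decide) (by decide) (by decide)
        rfl rfl rfl (by norm_num)
        (small_case 2 5 _ _ _ (by decide) (by decide) (by decide) (by norm_num) (by decide))
    · exact key 1 [0,5,4,3,2,1] [1,3,5,2,4,0] [5,4,3,2,1,0] (by decide) (by decide) (by decide)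
        rfl rfl rfl (by norm_num)
        (small_case 1 6 _ _ _ (by decide) (by decide) (by decide) (by norm_num) (by decide))
    · exact key 2 [0,2,6,5,4,3,1] [1,4,6,3,5,2,0] [6,5,4,3,2,1,0] (by decide) (by decide)
        (by decide) rfl rfl rfl (by norm_num)
        (small_case 2 7 _ _ _ (by decide) (by decide) (by decide) (by norm_num) (by decide))
  · obtain ⟨k, m, hk, hm, hodd, hk6, hnm⟩ :
        ∃ k m, 2 ≤ k ∧ 2 ≤ m ∧ (k + m) % 2 = 1 ∧ (n+5)/6 ≤ k ∧ n = 2*k+m := by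
      have h4 : n % 4 = 0 ∨ n % 4 = 1 ∨ n % 4 = 2 ∨ n % 4 = 3 := by omega
      rcases h4 with h | h | h | h
      · exact ⟨n/2 - 1, n - 2*(n/2 - 1), by omega, by omega, by omega, by omega, by omega⟩
      · exact ⟨(n-5)/2, n - 2*((n-5)/2), by omega, by omega, by omega, by omega, by omega⟩
      · exact ⟨n/2 - 2, n - 2*(n/2 - 2), by omega, by omega, by omega, by omega, by omega⟩
      · exact ⟨(n-3)/2, n - 2*((n-3)/2), by omega, by omega, by omega, by omega, by omega⟩
    subst hnm
    refine key k (listP k m) (listQ k m) (listA (2*k+m)) (nodupP hk hm) (nodupQ hk hm hodd)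
      (nodupA _) ?_ ?_ ?_ hk6 (grand hk hm hodd)
    · rw [listP, twoBlock_length]; omega
    · rw [listQ, twoBlock_length]; omega
    · rw [listA, twoBlock_length]; omega
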